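/- arXiv:2507.19257 — 2 statements merged into one kernel-verified Lean document; each statement's English description precedes it below -/
import Mathlib

section
/- Let $X$ be a Banach space, $M, \tilde M$ closed densely defined operators, $K, \tilde K : X \to X$ compact, set $L = M+K$, $\tilde L = \tilde M + \tilde K$, and suppose $\lambda \in \rho(L) \cap \rho(M) \cap \rho(\tilde M)$. If $\|[R(\lambda,\tilde M) - R(\lambda,M)]K\|_{X\to X} + \|R(\lambda,\tilde M)(\tilde K - K)\|_{X\to X} \leq \frac{1}{2 \|R(\lambda,L)(\lambda - M)\|_{X\to X}}$, then $\lambda \in \rho(\tilde L)$ and $\|R(\lambda,\tilde L)\|_{X\to X} \leq 2 \|R(\lambda,L)(\lambda - M)\|_{X\to X} \|R(\lambda,\tilde M)\|_{X\to X}$. -/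
/-- Stability of bounded invertibility. With `L = M + K`, `L̃ = M̃ + K̃`,
`λ ∈ ρ(L) ∩ ρ(M) ∩ ρ(M̃)` (resolvents given with their defining properties, and `G`
the bounded extension of `R(λ,L)(λ-M) = (I - R(λ,M)K)⁻¹`), if
`‖(R(λ,M̃)-R(λ,M))K‖ + ‖R(λ,M̃)(K̃-K)‖ ≤ 1/(2‖G‖)` then `λ ∈ ρ(L̃)` and
`‖R(λ,L̃)‖ ≤ 2‖G‖ ‖R(λ,M̃)‖`. -/
theorem stability_of_bounded_invertibility
    {X : Type*} [NormedAddCommGroup X] [NormedSpace ℂ X] [CompleteSpace X]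
    (DM DM' : Submodule ℂ X)
    (hdense : Dense (DM : Set X)) (hdense' : Dense (DM' : Set X))
    (M : DM →ₗ[ℂ] X) (M' : DM' →ₗ[ℂ] X)
    (hMclosed : IsClosed {p : X × X | ∃ h : p.1 ∈ DM, M ⟨p.1, h⟩ = p.2})
    (hM'closed : IsClosed {p : X × X | ∃ h : p.1 ∈ DM', M' ⟨p.1, h⟩ = p.2})
    (K K' : X →L[ℂ] X) (hK : IsCompactOperator K) (hK' : IsCompactOperator K')
    (lam : ℂ)
    -- λ ∈ ρ(M):
    (RM : X →L[ℂ] X) (hRMmem : ∀ y : X, RM y ∈ DM)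
    (hRMright : ∀ y : X, lam • (RM y) - M ⟨RM y, hRMmem y⟩ = y)
    (hRMleft : ∀ x : DM, RM (lam • (x : X) - M x) = x)
    -- λ ∈ ρ(M̃):
    (RM' : X →L[ℂ] X) (hRM'mem : ∀ y : X, RM' y ∈ DM')
    (hRM'right : ∀ y : X, lam • (RM' y) - M' ⟨RM' y, hRM'mem y⟩ = y)
    (hRM'left : ∀ x : DM', RM' (lam • (x : X) - M' x) = x)
    -- λ ∈ ρ(L), L = M + K:
    (RL : X →L[ℂ] X) (hRLmem : ∀ y : X, RL y ∈ DM)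
    (hRLright : ∀ y : X, lam • (RL y) - M ⟨RL y, hRLmem y⟩ - K (RL y) = y)
    (hRLleft : ∀ x : DM, RL (lam • (x : X) - M x - K (x : X)) = x)
    -- G : the bounded extension of R(λ,L)(λ - M), i.e. the inverse of I - R(λ,M)K:
    (G : X →L[ℂ] X)
    (hGleft : ∀ x : X, G (x - RM (K x)) = x)
    (hGright : ∀ x : X, G x - RM (K (G x)) = x)
    -- smallness hypothesis:
    (hsmall : ‖(RM' - RM).comp K‖ + ‖RM'.comp (K' - K)‖ ≤ 1 / (2 * ‖G‖)) :
    ∃ RL' : X →L[ℂ] X,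
      (∃ hmem : ∀ y : X, RL' y ∈ DM',
        (∀ y : X, lam • (RL' y) - M' ⟨RL' y, hmem y⟩ - K' (RL' y) = y) ∧
        (∀ x : DM', RL' (lam • (x : X) - M' x - K' (x : X)) = x)) ∧
      ‖RL'‖ ≤ 2 * ‖G‖ * ‖RM'‖ := by
  by_cases hGpos : 0 < ‖G‖
  swap
  · -- degenerate case: G = 0, hence X is trivial
    have hG0 : G = 0 :=
      norm_eq_zero.mp (le_antisymm (not_lt.mp hGpos) (norm_nonneg _))
    have hsub : Subsingleton X := by
      constructor
      intro a b
      have ha := hGleft a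
      have hb := hGleft b
      rw [hG0] at ha hb
      simp only [ContinuousLinearMap.zero_apply] at ha hb
      rw [← ha, ← hb]
    refine ⟨0, ⟨fun y => by
        simp only [ContinuousLinearMap.zero_apply]; exact DM'.zero_mem,
        fun y => Subsingleton.elim _ _, fun x => Subsingleton.elim _ _⟩, ?_⟩
    simp only [norm_zero]
    positivity
  · -- main case
    set D : X →L[ℂ] X := (RM' - RM).comp K + RM'.comp (K' - K) with hD
    have hDK' : RM'.comp K' = RM.comp K + D := by
      ext x
      simp only [hD, ContinuousLinearMap.comp_apply, ContinuousLinearMap.sub_apply,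
        ContinuousLinearMap.add_apply, map_sub]
      abel
    have hDnorm : ‖D‖ ≤ 1 / (2 * ‖G‖) :=
      le_trans (norm_add_le _ _) hsmall
    set t : X →L[ℂ] X := G * D with ht
    have htnorm : ‖t‖ ≤ 1 / 2 := by
      calc ‖t‖ ≤ ‖G‖ * ‖D‖ := norm_mul_le _ _
      _ ≤ ‖G‖ * (1 / (2 * ‖G‖)) := mul_le_mul_of_nonneg_left hDnorm (norm_nonneg _)
      _ = 1 / 2 := by field_simp
    have htlt : ‖t‖ < 1 := lt_of_le_of_lt htnorm (by norm_num)
    have hG1 : G * (1 - RM.comp K) = 1 := by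
      ext x
      simpa only [ContinuousLinearMap.mul_apply, ContinuousLinearMap.sub_apply,
        ContinuousLinearMap.one_apply, ContinuousLinearMap.comp_apply] using hGleft x
    have hG2 : (1 - RM.comp K) * G = 1 := by
      ext x
      simpa only [ContinuousLinearMap.mul_apply, ContinuousLinearMap.sub_apply,
        ContinuousLinearMap.one_apply, ContinuousLinearMap.comp_apply] using hGright x
    set u : (X →L[ℂ] X)ˣ := Units.oneSub t htlt with hu
    set E : X →L[ℂ] X := ↑u⁻¹ with hE
    have hE1 : (1 - t) * E = 1 := u.mul_inv
    have hE2 : E * (1 - t) = 1 := u.inv_mul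
    have hfact : (1 : X →L[ℂ] X) - RM'.comp K' = (1 - RM.comp K) * (1 - t) := by
      have expand : (1 - RM.comp K) * ((1 : X →L[ℂ] X) - t) =
          1 - RM.comp K - ((1 - RM.comp K) * G) * D := by
        rw [ht]; noncomm_ring
      rw [hDK', expand, hG2, one_mul]
      abel
    set F : X →L[ℂ] X := E * G with hF
    have hFleft : F * (1 - RM'.comp K') = 1 := by
      rw [hfact, hF, ← mul_assoc, mul_assoc E G, hG1, mul_one, hE2]
    have hFright : (1 - RM'.comp K') * F = 1 := by
      rw [hfact, hF, mul_assoc (1 - RM.comp K) (1 - t), ← mul_assoc (1 - t) E G, hE1,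
        one_mul, hG2]
    have hFl : ∀ v : X, F (v - RM' (K' v)) = v := by
      intro v
      have h := congrArg (fun T : X →L[ℂ] X => T v) hFleft
      simpa only [ContinuousLinearMap.mul_apply, ContinuousLinearMap.sub_apply,
        ContinuousLinearMap.one_apply, ContinuousLinearMap.comp_apply] using h
    have hFr : ∀ v : X, F v - RM' (K' (F v)) = v := by
      intro v
      have h := congrArg (fun T : X →L[ℂ] X => T v) hFright
      simpa only [ContinuousLinearMap.mul_apply, ContinuousLinearMap.sub_apply,
        ContinuousLinearMap.one_apply, ContinuousLinearMap.comp_apply] using h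
    set RL' : X →L[ℂ] X := F.comp RM' with hRL'
    have key : ∀ y : X, RL' y = RM' (y + K' (RL' y)) := by
      intro y
      have hy : RL' y = F (RM' y) := rfl
      rw [hy, map_add]
      exact eq_add_of_sub_eq (hFr (RM' y))
    have hmem : ∀ y : X, RL' y ∈ DM' := fun y => by rw [key y]; exact hRM'mem _
    have hEnorm : ‖E‖ ≤ 2 := by
      have hEeq : E = 1 + E * t := by
        have h := hE2
        rw [mul_one_sub] at h
        exact sub_eq_iff_eq_add.mp h
      have h1 : ‖E‖ ≤ ‖(1 : X →L[ℂ] X)‖ + ‖E‖ * ‖t‖ := by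
        nth_rewrite 1 [hEeq]
        exact le_trans (norm_add_le _ _) (add_le_add_right (norm_mul_le _ _) _)
      have hone : ‖(1 : X →L[ℂ] X)‖ ≤ 1 := ContinuousLinearMap.norm_id_le
      nlinarith [norm_nonneg E, norm_nonneg t]
    refine ⟨RL', ⟨hmem, ?_, ?_⟩, ?_⟩
    · intro y
      have h1 : (⟨RL' y, hmem y⟩ : DM') =
          ⟨RM' (y + K' (RL' y)), hRM'mem (y + K' (RL' y))⟩ := Subtype.ext (key y)
      have h2 := hRM'right (y + K' (RL' y))
      rw [h1]
      nth_rewrite 1 [key y]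
      rw [h2]
      exact add_sub_cancel_right y _
    · intro x
      have h1 : RM' (lam • (x : X) - M' x - K' (x : X)) = (x : X) - RM' (K' (x : X)) := by
        rw [map_sub, hRM'left x]
      show F (RM' (lam • (x : X) - M' x - K' (x : X))) = x
      rw [h1]
      exact hFl (x : X)
    · calc ‖RL'‖ ≤ ‖F‖ * ‖RM'‖ := ContinuousLinearMap.opNorm_comp_le _ _
      _ ≤ 2 * ‖G‖ * ‖RM'‖ := by
          gcongr
          calc ‖F‖ ≤ ‖E‖ * ‖G‖ := norm_mul_le _ _
          _ ≤ 2 * ‖G‖ := by gcongr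
end

section
/- Let $X$ be a Banach space. Suppose $M_k$ ($k \in \mathbb{N}$) and $M_\infty$ are closed densely defined operators on $X$, and $K_k, K_\infty : X \to X$ are compact with $K_k \to K_\infty$ in operator norm. Let $L_k = M_k + K_k$, $L_\infty = M_\infty + K_\infty$, and suppose $\lambda \in \rho(L_\infty)$, that $R(\lambda, M_k)$ exist for all large $k$ and $R(\lambda, M_\infty)$ exists, that $R(\lambda, M_k) x \to R(\lambda, M_\infty) x$ for every $x \in X$, and that $R(\lambda, M_k) K_\infty \to R(\lambda, M_\infty) K_\infty$ in operator norm. Then $R(\lambda, L_k)$ exists for all sufficiently large $k$, and $R(\lambda, L_k)x \to R(\lambda, L_\infty)x$ for every $x \in X$. -/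
open Filter Topology

variable {X : Type*} [NormedAddCommGroup X] [NormedSpace ℂ X] [CompleteSpace X]

/-- `R` is the resolvent at `lam` of the (possibly unbounded) operator `M + K`, where `M`
is defined on the submodule `D` and `K` is bounded. -/
def IsResolventOf (lam : ℂ) (D : Submodule ℂ X) (M : D →ₗ[ℂ] X) (K : X →L[ℂ] X)
    (R : X →L[ℂ] X) : Prop :=
  ∃ hmem : ∀ y : X, R y ∈ D,
    (∀ y : X, lam • (R y) - M ⟨R y, hmem y⟩ - K (R y) = y) ∧
    (∀ x : D, R (lam • (x : X) - M x - K (x : X)) = x)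

/-- Strong resolvent convergence for compactly perturbed operators.
If `K_k → K_∞` in norm, `λ ∈ ρ(L_∞)` with `L_k = M_k + K_k`, the resolvents
`R(λ,M_k)` exist for large `k` and converge strongly to `R(λ,M_∞)`, and
`R(λ,M_k)K_∞ → R(λ,M_∞)K_∞` in norm, then `R(λ,L_k)` exists for all large `k` and
`R(λ,L_k)x → R(λ,L_∞)x` for every `x`. -/
theorem strong_resolvent_convergence_compact_perturbation
    (lam : ℂ)
    (D : ℕ → Submodule ℂ X) (Dinf : Submodule ℂ X)
    (hdense : ∀ k, Dense ((D k : Set X))) (hdenseinf : Dense ((Dinf : Set X)))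
    (M : ∀ k, (D k) →ₗ[ℂ] X) (Minf : Dinf →ₗ[ℂ] X)
    (hclosed : ∀ k, IsClosed {p : X × X | ∃ h : p.1 ∈ D k, M k ⟨p.1, h⟩ = p.2})
    (hclosedinf : IsClosed {p : X × X | ∃ h : p.1 ∈ Dinf, Minf ⟨p.1, h⟩ = p.2})
    (K : ℕ → X →L[ℂ] X) (Kinf : X →L[ℂ] X)
    (hKcompact : ∀ k, IsCompactOperator (K k)) (hKinfcompact : IsCompactOperator Kinf)
    (hKconv : Tendsto (fun k => ‖K k - Kinf‖) atTop (𝓝 0))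
    -- resolvents of the M_k (existing for large k) and of M_∞ :
    (R : ℕ → X →L[ℂ] X) (Rinf : X →L[ℂ] X)
    (N₀ : ℕ) (hR : ∀ k ≥ N₀, IsResolventOf lam (D k) (M k) 0 (R k))
    (hRinf : IsResolventOf lam Dinf Minf 0 Rinf)
    -- λ ∈ ρ(L_∞), L_∞ = M_∞ + K_∞ :
    (RLinf : X →L[ℂ] X) (hRLinf : IsResolventOf lam Dinf Minf Kinf RLinf)
    -- strong convergence of resolvents and norm convergence against K_∞ :
    (hstrong : ∀ x : X, Tendsto (fun k => R k x) atTop (𝓝 (Rinf x)))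
    (hnormconv : Tendsto (fun k => ‖(R k).comp Kinf - Rinf.comp Kinf‖) atTop (𝓝 0)) :
    ∃ N₁ : ℕ, ∃ RL : ℕ → X →L[ℂ] X,
      (∀ k ≥ N₁, IsResolventOf lam (D k) (M k) (K k) (RL k)) ∧
      ∀ x : X, Tendsto (fun k => RL k x) atTop (𝓝 (RLinf x)) := by
  obtain ⟨Rmemi, hRi1, hRi2⟩ := hRinf
  obtain ⟨RLmemi, hRLi1, hRLi2⟩ := hRLinf
  -- second resolvent identities
  have idA : ∀ y : X, RLinf y = Rinf y + Rinf (Kinf (RLinf y)) := by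
    intro y
    have h2 := hRi2 ⟨RLinf y, RLmemi y⟩
    simp only [ContinuousLinearMap.zero_apply, sub_zero] at h2
    have h1 : lam • RLinf y - Minf ⟨RLinf y, RLmemi y⟩ = y + Kinf (RLinf y) :=
      sub_eq_iff_eq_add.mp (hRLi1 y)
    rw [h1, map_add] at h2
    exact h2.symm
  have idB : ∀ y : X, RLinf y = Rinf y + RLinf (Kinf (Rinf y)) := by
    intro y
    have h1 := hRi1 y
    simp only [ContinuousLinearMap.zero_apply, sub_zero] at h1
    have h2 := hRLi2 ⟨Rinf y, Rmemi y⟩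
    simp only at h2
    rw [h1, map_sub] at h2
    exact (sub_eq_iff_eq_add.mp h2)
  -- the limit operator `1 - Rinf ∘ Kinf` is a unit
  have hval_inv : ((1 : X →L[ℂ] X) - Rinf.comp Kinf) * (1 + RLinf.comp Kinf) = 1 := by
    ext x
    simp only [ContinuousLinearMap.mul_apply, ContinuousLinearMap.sub_apply,
      ContinuousLinearMap.add_apply, ContinuousLinearMap.one_apply,
      ContinuousLinearMap.coe_comp', Function.comp_apply, map_add]
    nth_rewrite 1 [idA (Kinf x)]
    abel
  have hinv_val : ((1 : X →L[ℂ] X) + RLinf.comp Kinf) * (1 - Rinf.comp Kinf) = 1 := by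
    ext x
    simp only [ContinuousLinearMap.mul_apply, ContinuousLinearMap.sub_apply,
      ContinuousLinearMap.add_apply, ContinuousLinearMap.one_apply,
      ContinuousLinearMap.coe_comp', Function.comp_apply, map_sub]
    nth_rewrite 1 [idB (Kinf x)]
    abel
  set Tinf : X →L[ℂ] X := 1 - Rinf.comp Kinf with hTinfdef
  let Uinf : (X →L[ℂ] X)ˣ := ⟨Tinf, 1 + RLinf.comp Kinf, hval_inv, hinv_val⟩
  -- uniform bound on ‖R k‖
  obtain ⟨C, hC⟩ : ∃ C, ∀ k, ‖R k‖ ≤ C := by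
    apply banach_steinhaus
    intro x
    obtain ⟨c, hc⟩ := (hstrong x).norm.bddAbove_range
    exact ⟨c, fun k => hc ⟨k, rfl⟩⟩
  -- norm convergence T k → Tinf
  set T : ℕ → X →L[ℂ] X := fun k => 1 - (R k).comp (K k) with hTdef
  have hTconv : Tendsto T atTop (𝓝 Tinf) := by
    rw [tendsto_iff_norm_sub_tendsto_zero]
    have hb : ∀ k, ‖T k - Tinf‖ ≤ C * ‖K k - Kinf‖ + ‖(R k).comp Kinf - Rinf.comp Kinf‖ := by
      intro k
      have he : T k - Tinf =
          -((R k).comp (K k - Kinf) + ((R k).comp Kinf - Rinf.comp Kinf)) := by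
        rw [hTdef, hTinfdef]
        simp only [ContinuousLinearMap.comp_sub]
        abel
      rw [he, norm_neg]
      refine (norm_add_le _ _).trans (add_le_add_left ?_ _)
      refine ((R k).opNorm_comp_le _).trans ?_
      exact mul_le_mul_of_nonneg_right (hC k) (norm_nonneg _)
    have hlim : Tendsto (fun k => C * ‖K k - Kinf‖ + ‖(R k).comp Kinf - Rinf.comp Kinf‖)
        atTop (𝓝 0) := by
      have := (hKconv.const_mul C).add hnormconv
      simpa using this
    exact squeeze_zero (fun k => norm_nonneg _) hb hlim
  -- eventually T k is a unit
  have hTinfunit : IsUnit Tinf := ⟨Uinf, rfl⟩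
  have hev : ∀ᶠ k in atTop, IsUnit (T k) :=
    hTconv.eventually (Units.isOpen.eventually_mem hTinfunit)
  obtain ⟨N₂, hN₂⟩ := eventually_atTop.mp hev
  refine ⟨max N₀ N₂, fun k => (Ring.inverse (T k)).comp (R k), ?_, ?_⟩
  · -- resolvent property
    intro k hk
    have hk0 : k ≥ N₀ := le_trans (le_max_left _ _) hk
    have hku : IsUnit (T k) := hN₂ k (le_trans (le_max_right _ _) hk)
    obtain ⟨Rmem, hR1, hR2⟩ := hR k hk0
    set S : X →L[ℂ] X := Ring.inverse (T k) with hSdef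
    have hSTp : ∀ y, S (T k y) = y := by
      intro y
      have h := ContinuousLinearMap.ext_iff.mp (Ring.inverse_mul_cancel _ hku) y
      simpa [ContinuousLinearMap.mul_apply] using h
    have hTSp : ∀ y, T k (S y) = y := by
      intro y
      have h := ContinuousLinearMap.ext_iff.mp (Ring.mul_inverse_cancel _ hku) y
      simpa [ContinuousLinearMap.mul_apply] using h
    have key : ∀ y : X, S y = y + R k (K k (S y)) := by
      intro y
      have h := hTSp y
      rw [hTdef] at h
      simp only [ContinuousLinearMap.sub_apply, ContinuousLinearMap.one_apply,
        ContinuousLinearMap.coe_comp', Function.comp_apply] at h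
      exact sub_eq_iff_eq_add.mp h
    have hfact : ∀ y : X, S.comp (R k) y = R k (y + K k (S.comp (R k) y)) := by
      intro y
      show S (R k y) = _
      rw [key (R k y), map_add]
      rfl
    have memRL : ∀ y : X, S.comp (R k) y ∈ D k := by
      intro y
      rw [hfact y]
      exact Rmem _
    refine ⟨memRL, ?_, ?_⟩
    · intro y
      set u := S.comp (R k) y with hudef
      set w := y + K k u with hwdef
      have hu : u = R k w := hfact y
      have h1 : lam • R k w - M k ⟨R k w, Rmem w⟩ = w := by
        have := hR1 w
        simpa using this
      have e1 : lam • u = lam • R k w := congrArg (lam • ·) hu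
      have e2 : M k ⟨u, memRL y⟩ = M k ⟨R k w, Rmem w⟩ := congrArg (M k) (Subtype.ext hu)
      rw [e2, e1, h1, hwdef]
      abel
    · intro x
      have hx : R k (lam • (x : X) - M k x) = x := by
        have := hR2 x
        simpa using this
      show S (R k (lam • (x : X) - M k x - K k (x : X))) = x
      have hz : R k (lam • (x : X) - M k x - K k (x : X)) = T k (x : X) := by
        rw [map_sub, hx, hTdef]
        simp
      rw [hz, hSTp]
  · -- strong convergence
    intro x
    have hRLeq : RLinf x = (Ring.inverse Tinf) (Rinf x) := by
      have h : Ring.inverse Tinf = (1 : X →L[ℂ] X) + RLinf.comp Kinf :=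
        Ring.inverse_unit Uinf
      rw [h]
      simpa using idB x
    rw [hRLeq]
    have hinv : Tendsto (fun k => Ring.inverse (T k)) atTop (𝓝 (Ring.inverse Tinf)) :=
      (NormedRing.inverse_continuousAt Uinf).tendsto.comp hTconv
    have happ : Tendsto (fun k => (Ring.inverse (T k), R k x)) atTop
        (𝓝 (Ring.inverse Tinf, Rinf x)) := hinv.prodMk_nhds (hstrong x)
    exact ((isBoundedBilinearMap_apply (𝕜 := ℂ)).continuous.tendsto _).comp happ
end
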